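/- On the set of parameters (ξ,η,ν,ϑ) with 0 < |ν| < 1, define Ω = dξ∧dη + ν dν∧dϑ. Fix (x,y,z) ∈ ℝ³ and consider the 2-dimensional submanifold given by ξ = x − √(1−ν²) cos(z/ν + ϑ), η = y − √(1−ν²) sin(z/ν + ϑ), parametrized by (ν,ϑ). Then the pull-back of Ω to this submanifold vanishes identically, i.e. on it dξ∧dη = −ν dν∧dϑ; the submanifold is Lagrangian for the symplectic form Ω. -/

import Mathlib

open Real ContinuousLinearMap

/-- With `Ω = dξ∧dη + ν dν∧dϑ` on path space (coordinates `((ξ,η),(ν,ϑ))`),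
the 2-submanifold of spiral paths through a fixed point `(x,y,z)`, parametrized
by `(ν,ϑ)` with `0 < |ν| < 1` via
`ξ = x − √(1−ν²)cos(z/ν+ϑ)`, `η = y − √(1−ν²)sin(z/ν+ϑ)`, is Lagrangian:
the pull-back of `Ω` vanishes identically. -/
theorem stmt_17 (x y z : ℝ) :
    let ψ : ℝ × ℝ → (ℝ × ℝ) × (ℝ × ℝ) := fun q =>
      ((x - Real.sqrt (1 - q.1 ^ 2) * Real.cos (z / q.1 + q.2),
        y - Real.sqrt (1 - q.1 ^ 2) * Real.sin (z / q.1 + q.2)), q)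
    ∀ q : ℝ × ℝ, 0 < |q.1| → |q.1| < 1 →
    ∀ w₁ w₂ : ℝ × ℝ,
      ((fderiv ℝ ψ q w₁).1.1 * (fderiv ℝ ψ q w₂).1.2
          - (fderiv ℝ ψ q w₂).1.1 * (fderiv ℝ ψ q w₁).1.2)
        + q.1 * ((fderiv ℝ ψ q w₁).2.1 * (fderiv ℝ ψ q w₂).2.2
          - (fderiv ℝ ψ q w₂).2.1 * (fderiv ℝ ψ q w₁).2.2) = 0 := by
  intro ψ q hν0 hν1 w₁ w₂
  obtain ⟨ν, ϑ⟩ := q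
  simp only at hν0 hν1 ⊢
  have hν : ν ≠ 0 := by simpa [abs_pos] using hν0
  have h1ν : 0 < 1 - ν ^ 2 := by
    have := sq_abs ν
    nlinarith [abs_nonneg ν]
  set r := Real.sqrt (1 - ν ^ 2) with hrdef
  have hr : r ^ 2 = 1 - ν ^ 2 := Real.sq_sqrt h1ν.le
  have hrpos : 0 < r := Real.sqrt_pos.mpr h1ν
  set θ := z / ν + ϑ with hθdef
  -- derivative of sqrt(1 - t^2)
  have hu : HasDerivAt (fun t : ℝ => 1 - t ^ 2) (-(2 * ν)) ν := by
    simpa using ((hasDerivAt_pow 2 ν).const_sub 1)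
  have hrν : HasDerivAt (fun t : ℝ => Real.sqrt (1 - t ^ 2)) (-(2 * ν) / (2 * r)) ν :=
    hu.sqrt h1ν.ne'
  have hR : HasFDerivAt (fun q : ℝ × ℝ => Real.sqrt (1 - q.1 ^ 2))
      ((-(2 * ν) / (2 * r)) • ContinuousLinearMap.fst ℝ ℝ ℝ) (ν, ϑ) :=
    by have := hrν.comp_hasFDerivAt (f := Prod.fst) (f' := ContinuousLinearMap.fst ℝ ℝ ℝ) ((ν, ϑ) : ℝ × ℝ) (hasFDerivAt_fst (p := ((ν, ϑ) : ℝ × ℝ))); exact this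
  -- derivative of z/q.1 + q.2
  have h1 : HasDerivAt (fun t : ℝ => z / t) (-(z / ν ^ 2)) ν := by
    simpa [div_eq_mul_inv, mul_comm] using ((hasDerivAt_inv hν).const_mul z)
  have hθ' : HasFDerivAt (fun q : ℝ × ℝ => z / q.1 + q.2)
      ((-(z / ν ^ 2)) • ContinuousLinearMap.fst ℝ ℝ ℝ + ContinuousLinearMap.snd ℝ ℝ ℝ)
      (ν, ϑ) :=
    (h1.comp_hasFDerivAt _ hasFDerivAt_fst).add hasFDerivAt_snd
  have hC : HasFDerivAt (fun q : ℝ × ℝ => Real.cos (z / q.1 + q.2))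
      ((-Real.sin θ) • ((-(z / ν ^ 2)) • ContinuousLinearMap.fst ℝ ℝ ℝ
        + ContinuousLinearMap.snd ℝ ℝ ℝ)) (ν, ϑ) :=
    by have := (Real.hasDerivAt_cos θ).comp_hasFDerivAt ((ν,ϑ) : ℝ × ℝ) hθ'; exact this
  have hS : HasFDerivAt (fun q : ℝ × ℝ => Real.sin (z / q.1 + q.2))
      ((Real.cos θ) • ((-(z / ν ^ 2)) • ContinuousLinearMap.fst ℝ ℝ ℝ
        + ContinuousLinearMap.snd ℝ ℝ ℝ)) (ν, ϑ) :=
    by have := (Real.hasDerivAt_sin θ).comp_hasFDerivAt ((ν,ϑ) : ℝ × ℝ) hθ'; exact this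
  have hf₁ := (hasFDerivAt_const x ((ν, ϑ) : ℝ × ℝ)).sub (hR.mul hC)
  have hf₂ := (hasFDerivAt_const y ((ν, ϑ) : ℝ × ℝ)).sub (hR.mul hS)
  have hψ := ((hf₁.prodMk hf₂).prodMk (hasFDerivAt_id ((ν, ϑ) : ℝ × ℝ)))
  have hfd := hψ.fderiv
  rw [show ψ = (fun q : ℝ × ℝ =>
      (((fun q : ℝ × ℝ => x - Real.sqrt (1 - q.1 ^ 2) * Real.cos (z / q.1 + q.2)) q,
        (fun q : ℝ × ℝ => y - Real.sqrt (1 - q.1 ^ 2) * Real.sin (z / q.1 + q.2)) q), id q)) from rfl]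
  erw [hfd]
  simp only [ContinuousLinearMap.prod_apply, ContinuousLinearMap.coe_fst',
    ContinuousLinearMap.coe_snd', ContinuousLinearMap.smul_apply,
    ContinuousLinearMap.add_apply, ContinuousLinearMap.coe_sub',
    ContinuousLinearMap.zero_apply, Pi.sub_apply, ContinuousLinearMap.coe_id', id_eq,
    ContinuousLinearMap.coe_smul', Pi.smul_apply, smul_eq_mul]
  simp only [← hrdef, ← hθdef]
  have hs : Real.sin θ ^ 2 + Real.cos θ ^ 2 = 1 := Real.sin_sq_add_cos_sq θ
  have hs' : Real.sin (z * ν⁻¹ + ϑ) ^ 2 + Real.cos (z * ν⁻¹ + ϑ) ^ 2 = 1 :=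
    Real.sin_sq_add_cos_sq _
  field_simp
  linear_combination (1 * ν ^ 5 * r ^ 2 * (w₁.2 * w₂.1 - w₁.1 * w₂.2)) * hs
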